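/- Let n, d be positive integers with n > d and let A be an n × n matrix with entries in {0,1} such that every row of A has exactly d ones and every column of A has exactly d ones. Let Γ_A be the simple graph on the column indices of A in which two distinct columns j, k are adjacent if and only if the number of rows i with A_{i,j} = A_{i,k} = 1 equals d − 1. If Γ_A is connected, then no two distinct rows of A are equal; equivalently, distinct rows have distinct supports. -/

import Mathlib

open Finset

/-- The graph `Γ_A` on the column indices of a 0/1-matrix `A` (encoded with `Bool` entries):
two distinct columns `j, k` are adjacent iff the number of rows `i` with
`A i j = A i k = 1` equals `d - 1`. -/
def gammaA (n d : ℕ) (A : Fin n → Fin n → Bool) : SimpleGraph (Fin n) where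
  Adj j k := j ≠ k ∧ (univ.filter (fun i => A i j ∧ A i k)).card = d - 1
  symm := by
    constructor
    rintro j k ⟨hjk, hcard⟩
    refine ⟨hjk.symm, ?_⟩
    rw [← hcard]
    congr 1
    ext i
    simp [and_comm]
  loopless := ⟨fun j h => h.1 rfl⟩

/-- If every row and every column of an `n × n` 0/1-matrix `A` has exactly `d` ones,
`n > d`, and `Γ_A` is connected, then no two distinct rows of `A` are equal. -/
theorem stmt1 (n d : ℕ) (hn : 0 < n) (hd : 0 < d) (hnd : d < n)
    (A : Fin n → Fin n → Bool)
    (hrow : ∀ i : Fin n, (univ.filter (fun j => A i j)).card = d)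
    (hcol : ∀ j : Fin n, (univ.filter (fun i => A i j)).card = d)
    (hconn : (gammaA n d A).Connected) :
    ∀ i₁ i₂ : Fin n, (∀ j, A i₁ j = A i₂ j) → i₁ = i₂ := by

  intro i₁ i₂ heq
  by_contra hne
  have key : ∀ j k, A i₁ j = true → (gammaA n d A).Adj j k → A i₁ k = true := by
    intro j k hj hadj
    by_contra hk
    simp only [Bool.not_eq_true] at hk
    have hk2 : A i₂ k = false := (heq k) ▸ hk
    obtain ⟨hjk, hcard⟩ := hadj
    set T := univ.filter (fun i => A i j ∧ A i k) with hT
    have hi1 : i₁ ∉ T := by simp [hT, hk]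
    have hi2 : i₂ ∉ T := by simp [hT, hk2]
    have hsub : insert i₁ (insert i₂ T) ⊆ univ.filter (fun i => A i j = true) := by
      intro x hx
      simp only [mem_insert] at hx
      rcases hx with rfl | rfl | hx
      · simp [hj]
      · have := heq j; simp only [this] at hj; simp [hj]
      · simp only [hT, mem_filter] at hx ⊢
        exact ⟨hx.1, hx.2.1⟩
    have hc : (insert i₁ (insert i₂ T)).card = T.card + 2 := by
      rw [card_insert_of_notMem (by simp [hne, hi1]), card_insert_of_notMem hi2]
    have hle := card_le_card hsub
    rw [hc, hcol j] at hle
    omega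
  obtain ⟨j, hj⟩ : ∃ j, A i₁ j = true := by
    have hne' : (univ.filter (fun j => A i₁ j = true)).Nonempty := by
      rw [← card_pos, hrow]; exact hd
    obtain ⟨j, hj⟩ := hne'
    exact ⟨j, (mem_filter.mp hj).2⟩
  obtain ⟨k, hk⟩ : ∃ k, A i₁ k = false := by
    by_contra h
    push_neg at h
    have hall : (univ.filter (fun j => A i₁ j = true)).card = n := by
      rw [filter_true_of_mem (fun x _ => by have := h x; revert this; cases A i₁ x <;> simp)]
      simp
    have := hrow i₁
    omega
  have walkclosed : ∀ {a b : Fin n} (w : (gammaA n d A).Walk a b),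
      A i₁ a = true → A i₁ b = true := by
    intro a b w
    induction w with
    | nil => exact id
    | cons h p ih => exact fun ha => ih (key _ _ ha h)
  obtain ⟨w⟩ := hconn j k
  have := walkclosed w hj
  rw [hk] at this
  exact Bool.false_ne_true this
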